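/- Let F: X → ℤ/p^mℤ be an (additive) polynomial of degree < k with respect to a measure-preserving ℤ/pℤ-action generated by T on a probability space X, where p is a prime with p ≥ k. Then p·F is invariant under T (and hence a.e. constant if the action is ergodic). Here F is a polynomial of degree < k means (Δ⁺)^k F = 0 where Δ⁺F = F∘T − F. -/

import Mathlib

open MeasureTheory

/-- The additive derivative of `F` with respect to a transformation `S`. -/
def addDeriv {X A : Type*} [SubtractionMonoid A] (S : X → X) (F : X → A) : X → A :=
  fun x => F (S x) - F x

section Aux

variable {X A : Type*} [AddCommGroup A] (T : X → X)

/-- The shift endomorphism `F ↦ F ∘ T` on functions `X → A`. -/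
private def shiftMap : AddMonoid.End (X → A) :=
  AddMonoidHom.mk' (fun F => F ∘ T) (fun _ _ => rfl)

/-- The difference endomorphism. -/
private def dMap : AddMonoid.End (X → A) := shiftMap T - 1

private lemma shiftMap_pow (n : ℕ) (F : X → A) :
    ((shiftMap T) ^ n : AddMonoid.End (X → A)) F = F ∘ T^[n] := by
  induction n generalizing F with
  | zero => rfl
  | succ n ih =>
    rw [pow_succ]
    show ((shiftMap T) ^ n : AddMonoid.End (X → A)) ((shiftMap T) F) = _
    rw [show (shiftMap T) F = F ∘ T from rfl, ih (F ∘ T)]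
    funext x
    exact congrArg F (Function.iterate_succ_apply' T n x).symm

private lemma dMap_apply (F : X → A) : (dMap T : AddMonoid.End (X → A)) F = addDeriv T F := by
  funext x; rfl

private lemma dMap_pow (n : ℕ) (F : X → A) :
    ((dMap T) ^ n : AddMonoid.End (X → A)) F = (addDeriv T)^[n] F := by
  induction n generalizing F with
  | zero => rfl
  | succ n ih =>
    rw [pow_succ]
    show ((dMap T) ^ n : AddMonoid.End (X → A)) ((dMap T) F) = _
    rw [dMap_apply, ih (addDeriv T F), Function.iterate_succ_apply]

private lemma addDeriv_zero : addDeriv T (0 : X → A) = 0 := by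
  funext x; simp [addDeriv]

/-- Binomial expansion of the identity: if `T^[p] = id` then
`F = ∑ C(p,j) • Δ^j F`. -/
private lemma key (p : ℕ) (hTp : T^[p] = id) (F : X → A) :
    ∑ j ∈ Finset.range (p + 1), p.choose j • (addDeriv T)^[j] F = F := by
  have hcomm : Commute (dMap T : AddMonoid.End (X → A)) 1 := Commute.one_right _
  have hpow := hcomm.add_pow p
  have hsub : (dMap T : AddMonoid.End (X → A)) + 1 = shiftMap T := sub_add_cancel _ _
  rw [hsub] at hpow
  have hS : ((shiftMap T) ^ p : AddMonoid.End (X → A)) F = F := by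
    rw [shiftMap_pow, hTp]; rfl
  rw [hpow] at hS
  have hsum : ((∑ m ∈ Finset.range (p + 1),
        (dMap T) ^ m * 1 ^ (p - m) * ((p.choose m : ℕ) : AddMonoid.End (X → A))) :
        AddMonoid.End (X → A)) F
      = ∑ j ∈ Finset.range (p + 1), p.choose j • (addDeriv T)^[j] F := by
    erw [AddMonoidHom.finset_sum_apply]
    apply Finset.sum_congr rfl
    intro j hj
    rw [one_pow, mul_one]
    show ((dMap T) ^ j : AddMonoid.End (X → A)) (((p.choose j : ℕ) : AddMonoid.End (X → A)) F)
      = p.choose j • (addDeriv T)^[j] F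
    rw [AddMonoid.End.natCast_apply, map_nsmul, dMap_pow]
  rw [← hsum]
  exact hS

/-- Main induction: if `Δ^k F = 0` with `k ≤ p`, `p` prime, `T^[p] = id`,
then `p • ΔF = 0`. -/
private lemma main_lemma (p : ℕ) (hp : p.Prime) (hTp : T^[p] = id) :
    ∀ k, k ≤ p → ∀ F : X → A, (addDeriv T)^[k] F = 0 → p • addDeriv T F = 0 := by
  intro k
  induction k using Nat.strong_induction_on with
  | _ k IH =>
    match k with
    | 0 =>
      intro _ F hFk
      have hF0 : F = 0 := hFk
      rw [hF0, addDeriv_zero, smul_zero]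
    | (k + 1) =>
      intro hkp F hFk
      -- the sum over j from 1 to p vanishes
      have hsum : ∑ j ∈ Finset.Ico 1 (p + 1), p.choose j • (addDeriv T)^[j] F = 0 := by
        have hk := key T p hTp F
        rw [Finset.range_eq_Ico, Finset.sum_eq_sum_Ico_succ_bot (by omega : 0 < p + 1)] at hk
        simp only [Nat.choose_zero_right, one_smul, Function.iterate_zero_apply] at hk
        have := left_eq_add.mp hk.symm
        exact this
      -- all terms other than j = 1 vanish
      have hterm : ∀ j ∈ Finset.Ico 1 (p + 1), j ≠ 1 →
          p.choose j • (addDeriv T)^[j] F = 0 := by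
        intro j hj hj1
        simp only [Finset.mem_Ico] at hj
        by_cases hjk : k + 1 ≤ j
        · have hz : (addDeriv T)^[j] F = 0 := by
            rw [show j = (j - (k + 1)) + (k + 1) by omega, Function.iterate_add_apply, hFk]
            exact Function.iterate_fixed (addDeriv_zero T) _
          rw [hz, smul_zero]
        · push_neg at hjk
          have hj2 : 2 ≤ j := by omega
          have hjp : j < p := by omega
          obtain ⟨c, hc⟩ := hp.dvd_choose_self (by omega : j ≠ 0) hjp
          have hdeg : (addDeriv T)^[k + 2 - j] ((addDeriv T)^[j - 1] F) = 0 := by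
            rw [← Function.iterate_add_apply, show (k + 2 - j) + (j - 1) = k + 1 by omega, hFk]
          have h2 := IH (k + 2 - j) (by omega) (by omega) _ hdeg
          have h3 : p • (addDeriv T)^[j] F = 0 := by
            have hiter : (addDeriv T)^[j] F = addDeriv T ((addDeriv T)^[j - 1] F) := by
              conv_lhs => rw [show j = (j - 1) + 1 by omega]
              rw [Function.iterate_succ_apply']
            rw [hiter]; exact h2
          rw [hc, mul_comm, mul_smul, h3, smul_zero]
      have h1mem : (1 : ℕ) ∈ Finset.Ico 1 (p + 1) := by
        simp [Finset.mem_Ico]; omega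
      rw [Finset.sum_eq_single_of_mem 1 h1mem hterm] at hsum
      simpa using hsum

end Aux

private lemma foldr_replicate {X A : Type*} [SubtractionMonoid A] (g : X → X) (F : X → A) :
    ∀ n : ℕ, (List.replicate n g).foldr addDeriv F = (addDeriv g)^[n] F := by
  intro n
  induction n with
  | zero => rfl
  | succ n ih =>
    rw [List.replicate_succ, List.foldr_cons, ih, Function.iterate_succ_apply']

/-- Let `T` generate a measure-preserving `ℤ/pℤ`-action on a probability space (so
`T^p = id`), let `p` be a prime with `p ≥ k`, and let `F : X → ℤ/p^mℤ` be an additive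
polynomial of degree `< k` (the `k`-fold iterated additive derivatives with respect to
powers of `T` vanish identically).  Then `p • F` is invariant under `T`. -/
theorem p_smul_invariant_of_addPoly
    {X : Type*} [MeasurableSpace X] (μ : Measure X) [IsProbabilityMeasure μ]
    (T : X → X) (hT : MeasurePreserving T μ μ)
    (p m k : ℕ) (hp : p.Prime) (hpk : k ≤ p)
    (hTp : T^[p] = id)
    (F : X → ZMod (p ^ m))
    (hF : ∀ a : Fin k → ℕ, ∀ x,
      (((List.ofFn a).map (fun i => T^[i])).foldr addDeriv F) x = 0) :
    ∀ x, (p : ZMod (p ^ m)) * F (T x) = (p : ZMod (p ^ m)) * F x := by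
  have hrep : (addDeriv T)^[k] F = 0 := by
    funext y
    have h := hF (fun _ => 1) y
    have hl : ((List.ofFn (fun _ : Fin k => (1 : ℕ))).map (fun i => T^[i]))
        = List.replicate k T := by
      rw [List.ofFn_const, List.map_replicate, Function.iterate_one]
    rw [hl, foldr_replicate] at h
    exact h
  have hmain := main_lemma T p hp hTp k hpk F hrep
  intro x
  have hx := congrFun hmain x
  simp only [Pi.smul_apply, Pi.zero_apply, addDeriv] at hx
  have hx' : (p : ZMod (p ^ m)) * (F (T x) - F x) = 0 := by
    rw [← nsmul_eq_mul]; exact hx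
  rw [mul_sub] at hx'
  exact sub_eq_zero.mp hx'
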